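/- Let Z be a finite set, p : Z → ℝ with p_z ≥ 0 and Σ_z p_z = 1, and let (ρ^Q_z)_{z∈Z} and (ρ^C_z)_{z∈Z} be families of d×d density matrices. On the space of complex d×d matrices with the Hilbert–Schmidt inner product ⟨A,B⟩ = Tr[A†B], define the linear maps (superoperators) η^{CC}(X) = Σ_z p_z ρ^C_z · Tr[ρ^C_z X] and η^{QC}(X) = Σ_z p_z ρ^Q_z · Tr[ρ^C_z X]. Then there exists a linear map ζ on d×d matrices satisfying η^{CC} ∘ ζ = (η^{QC})†, where (η^{QC})† denotes the adjoint of η^{QC} with respect to the Hilbert–Schmidt inner product. -/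

import Mathlib

open Matrix ComplexOrder

/-- The superoperator `X ↦ Σ_z p_z Tr[ρR_z X] • ρL_z` on `d×d` complex matrices.
With `ρL = ρ^Q, ρR = ρ^C` this is `η^{QC}`; with `ρL = ρR = ρ^C` it is `η^{CC}`. -/
noncomputable def etaMap {Z : Type*} [Fintype Z] {d : ℕ} (p : Z → ℝ)
    (ρL ρR : Z → Matrix (Fin d) (Fin d) ℂ) :
    Matrix (Fin d) (Fin d) ℂ →ₗ[ℂ] Matrix (Fin d) (Fin d) ℂ :=
  ∑ z, (p z : ℂ) •
    LinearMap.smulRight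
      (Matrix.traceLinearMap (Fin d) ℂ ℂ ∘ₗ LinearMap.mulLeft ℂ (ρR z)) (ρL z)

open scoped InnerProductSpace ComplexConjugate

lemma etaMap_apply {Z : Type*} [Fintype Z] {d : ℕ} (p : Z → ℝ)
    (ρL ρR : Z → Matrix (Fin d) (Fin d) ℂ) (X : Matrix (Fin d) (Fin d) ℂ) :
    etaMap p ρL ρR X = ∑ z, ((p z : ℂ) * (ρR z * X).trace) • ρL z := by
  simp [etaMap, LinearMap.sum_apply, LinearMap.smulRight_apply, LinearMap.mulLeft_apply,
    smul_smul]

/-- The matrix space as a Euclidean space. -/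
noncomputable def matEquiv (d : ℕ) :
    Matrix (Fin d) (Fin d) ℂ ≃ₗ[ℂ] EuclideanSpace ℂ (Fin d × Fin d) where
  toFun A := WithLp.toLp 2 (fun ij : Fin d × Fin d => A ij.1 ij.2)
  invFun x := Matrix.of fun i j => x (i, j)
  map_add' A B := rfl
  map_smul' c A := rfl
  left_inv A := rfl
  right_inv x := rfl

lemma matEquiv_inner {d : ℕ} (A B : Matrix (Fin d) (Fin d) ℂ) :
    ⟪matEquiv d A, matEquiv d B⟫_ℂ = (Aᴴ * B).trace := by
  simp only [PiLp.inner_apply, RCLike.inner_apply, matEquiv, LinearEquiv.coe_mk,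
    WithLp.ofLp_toLp]
  rw [Matrix.trace, Fintype.sum_prod_type]
  simp [Matrix.mul_apply, Matrix.conjTranspose_apply, Finset.mul_sum, mul_comm]
  rw [Finset.sum_comm]
  rfl

/-- Hilbert–Schmidt adjoint relation: swapping the two families. -/
lemma etaMap_adjoint_rel {Z : Type*} [Fintype Z] {d : ℕ} (p : Z → ℝ)
    (ρL ρR : Z → Matrix (Fin d) (Fin d) ℂ)
    (hL : ∀ z, (ρL z).IsHermitian) (hR : ∀ z, (ρR z).IsHermitian)
    (A B : Matrix (Fin d) (Fin d) ℂ) :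
    ((etaMap p ρL ρR A)ᴴ * B).trace = (Aᴴ * etaMap p ρR ρL B).trace := by
  rw [etaMap_apply, etaMap_apply]
  rw [Matrix.conjTranspose_sum, Matrix.sum_mul, Matrix.trace_sum, Matrix.mul_sum,
    Matrix.trace_sum]
  refine Finset.sum_congr rfl fun z _ => ?_
  rw [Matrix.conjTranspose_smul, Matrix.smul_mul, Matrix.trace_smul, Matrix.mul_smul,
    Matrix.trace_smul, (hL z).eq]
  have h1 : (star ((p z : ℂ) * (ρR z * A).trace)) = (p z : ℂ) * (Aᴴ * ρR z).trace := by
    rw [star_mul', ← Matrix.trace_conjTranspose, Matrix.conjTranspose_mul, (hR z).eq]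
    simp [Complex.star_def, Complex.conj_ofReal]
  rw [h1]
  simp only [smul_eq_mul]
  ring_nf

/-- Factorization lemma: if `f` is self-adjoint and `range g ⟂ ker f`, then `g` factors
through `f`. -/
lemma exists_factor {V : Type*} [NormedAddCommGroup V] [InnerProductSpace ℂ V]
    [FiniteDimensional ℂ V] (f g : V →ₗ[ℂ] V)
    (hf : ∀ x y, ⟪f x, y⟫_ℂ = ⟪x, f y⟫_ℂ)
    (hg : ∀ x, f x = 0 → ∀ a, ⟪x, g a⟫_ℂ = 0) :
    ∃ ζ : V →ₗ[ℂ] V, f ∘ₗ ζ = g := by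
  have hle : LinearMap.range f ≤ (LinearMap.ker f)ᗮ := by
    rintro _ ⟨y, rfl⟩
    intro x hx
    rw [← hf x y, LinearMap.mem_ker.mp hx, inner_zero_left]
  have heq : LinearMap.range f = (LinearMap.ker f)ᗮ := by
    apply Submodule.eq_of_le_of_finrank_le hle
    have h1 := Submodule.finrank_add_finrank_orthogonal (LinearMap.ker f)
    have h2 := LinearMap.finrank_range_add_finrank_ker f
    omega
  have hrange : LinearMap.range g ≤ LinearMap.range f := by
    rintro _ ⟨a, rfl⟩
    rw [heq]
    intro x hx
    exact hg x (LinearMap.mem_ker.mp hx) a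
  obtain ⟨s, hs⟩ := f.rangeRestrict.exists_rightInverse_of_surjective
    (LinearMap.range_eq_top.mpr f.surjective_rangeRestrict)
  refine ⟨s ∘ₗ g.codRestrict (LinearMap.range f) (fun a => hrange ⟨a, rfl⟩), ?_⟩
  ext x
  have : f.rangeRestrict (s (g.codRestrict (LinearMap.range f) (fun a => hrange ⟨a, rfl⟩) x))
      = g.codRestrict (LinearMap.range f) (fun a => hrange ⟨a, rfl⟩) x := by
    rw [← LinearMap.comp_apply, hs, LinearMap.id_apply]
  simpa using congrArg Subtype.val this

lemma trace_herm_star {d : ℕ} {M X : Matrix (Fin d) (Fin d) ℂ} (hM : M.IsHermitian) :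
    (Xᴴ * M).trace = star ((M * X).trace) := by
  rw [← Matrix.trace_conjTranspose, Matrix.conjTranspose_mul, hM.eq]

lemma etaMap_ker_coeff {Z : Type*} [Fintype Z] {d : ℕ} (p : Z → ℝ) (hp : ∀ z, 0 ≤ p z)
    (ρC : Z → Matrix (Fin d) (Fin d) ℂ) (hC : ∀ z, (ρC z).IsHermitian)
    (X : Matrix (Fin d) (Fin d) ℂ)
    (hX : etaMap p ρC ρC X = 0) (z : Z) :
    (p z : ℂ) * (ρC z * X).trace = 0 := by
  have h0 : (Xᴴ * etaMap p ρC ρC X).trace = 0 := by rw [hX, Matrix.mul_zero, Matrix.trace_zero]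
  rw [etaMap_apply, Matrix.mul_sum, Matrix.trace_sum] at h0
  have hterm : ∀ w, (Xᴴ * (((p w : ℂ) * (ρC w * X).trace) • ρC w)).trace
      = ((p w * Complex.normSq ((ρC w * X).trace) : ℝ) : ℂ) := by
    intro w
    rw [Matrix.mul_smul, Matrix.trace_smul, trace_herm_star (hC w)]
    simp only [smul_eq_mul]
    rw [mul_assoc, Complex.star_def, Complex.mul_conj]
    push_cast
    ring
  rw [Finset.sum_congr rfl (fun w _ => hterm w)] at h0
  have h0' : ∑ w, p w * Complex.normSq ((ρC w * X).trace) = 0 := by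
    rw [← Complex.ofReal_sum] at h0
    exact_mod_cast h0
  have hz : p z * Complex.normSq ((ρC z * X).trace) = 0 := by
    have := (Finset.sum_eq_zero_iff_of_nonneg (fun w _ =>
      mul_nonneg (hp w) (Complex.normSq_nonneg _))).mp h0' z (Finset.mem_univ z)
    exact this
  rcases mul_eq_zero.mp hz with h | h
  · simp [h]
  · simp [Complex.normSq_eq_zero.mp h]

/-- **Existence of the dual-optimal superoperator (Eq. (30) of the paper).** There is a
linear map ζ on matrices with `η^{CC} ∘ ζ = (η^{QC})†`, the adjoint being taken with
respect to the Hilbert–Schmidt inner product `⟨A,B⟩ = Tr[A†B]`. -/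
theorem exists_zeta_solving_superoperator_equation
    {Z : Type*} [Fintype Z] {d : ℕ}
    (p : Z → ℝ) (hp : ∀ z, 0 ≤ p z) (hp1 : ∑ z, p z = 1)
    (ρQ ρC : Z → Matrix (Fin d) (Fin d) ℂ)
    (hρQ : ∀ z, (ρQ z).PosSemidef ∧ (ρQ z).trace = 1)
    (hρC : ∀ z, (ρC z).PosSemidef ∧ (ρC z).trace = 1) :
    ∃ ζ : Matrix (Fin d) (Fin d) ℂ →ₗ[ℂ] Matrix (Fin d) (Fin d) ℂ,
      ∀ A B : Matrix (Fin d) (Fin d) ℂ,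
        (((etaMap p ρC ρC) (ζ A))ᴴ * B).trace = (Aᴴ * (etaMap p ρQ ρC) B).trace := by
  have hQh : ∀ z, (ρQ z).IsHermitian := fun z => (hρQ z).1.1
  have hCh : ∀ z, (ρC z).IsHermitian := fun z => (hρC z).1.1
  set e := matEquiv d
  set f := etaMap p ρC ρC
  set g := etaMap p ρC ρQ
  set f' : EuclideanSpace ℂ (Fin d × Fin d) →ₗ[ℂ] EuclideanSpace ℂ (Fin d × Fin d) :=
    e.toLinearMap ∘ₗ f ∘ₗ e.symm.toLinearMap
  set g' : EuclideanSpace ℂ (Fin d × Fin d) →ₗ[ℂ] EuclideanSpace ℂ (Fin d × Fin d) :=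
    e.toLinearMap ∘ₗ g ∘ₗ e.symm.toLinearMap
  obtain ⟨ζ', hζ'⟩ : ∃ ζ' , f' ∘ₗ ζ' = g' := by
    apply exists_factor
    · intro x y
      show ⟪e (f (e.symm x)), y⟫_ℂ = ⟪x, e (f (e.symm y))⟫_ℂ
      rw [← e.apply_symm_apply y, ← e.apply_symm_apply x, e.symm_apply_apply,
        e.symm_apply_apply, matEquiv_inner, matEquiv_inner]
      exact etaMap_adjoint_rel p ρC ρC hCh hCh _ _
    · intro x hx a
      show ⟪x, e (g (e.symm a))⟫_ℂ = 0
      rw [← e.apply_symm_apply x, matEquiv_inner]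
      have hker : f (e.symm x) = 0 := by
        have : e (f (e.symm x)) = 0 := hx
        simpa using congrArg e.symm this
      rw [show g (e.symm a) = etaMap p ρC ρQ (e.symm a) from rfl, etaMap_apply,
        Matrix.mul_sum, Matrix.trace_sum]
      refine Finset.sum_eq_zero fun z _ => ?_
      rw [Matrix.mul_smul, Matrix.trace_smul, trace_herm_star (hCh z)]
      have h := etaMap_ker_coeff p hp ρC hCh (e.symm x) hker z
      have : star ((ρC z * e.symm x).trace) * (p z : ℂ) = 0 := by
        have := congrArg star h
        simpa [mul_comm, Complex.conj_ofReal] using this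
      simp only [smul_eq_mul]
      calc (p z : ℂ) * (ρQ z * e.symm a).trace * star ((ρC z * e.symm x).trace)
          = (ρQ z * e.symm a).trace * (star ((ρC z * e.symm x).trace) * (p z : ℂ)) := by ring
        _ = 0 := by rw [this, mul_zero]
  refine ⟨e.symm.toLinearMap ∘ₗ ζ' ∘ₗ e.toLinearMap, fun A B => ?_⟩
  have hfg : f (e.symm (ζ' (e A))) = g A := by
    have := congrArg (fun h => e.symm (h (e A))) hζ'
    simpa [f', g'] using this
  rw [show (etaMap p ρC ρC) ((e.symm.toLinearMap ∘ₗ ζ' ∘ₗ e.toLinearMap) A)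
      = f (e.symm (ζ' (e A))) from rfl, hfg]
  exact etaMap_adjoint_rel p ρC ρQ hCh hQh A B
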